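/- Under the regularized gradient flow of the previous statement, ‖W_ℓ²(t) − W_{ℓ+1}²(t)‖ ≤ exp(−4η^{2L−2} t) · ‖W_ℓ²(0) − W_{ℓ+1}²(0)‖ for all t ≥ 0 and each ℓ = 1,...,L−1. -/

import Mathlib

open Finset

/-- The regularized loss `L_R(W₁,…,W_L) = ‖W* − W_L⋯W₁‖² + Tr(∏(W_ℓ²+η²I) − ∏W_ℓ²)`
for diagonal matrices `W_ℓ = diagonal (v ℓ)` and `W* = diagonal Wstar`, expressed in terms
of the diagonal entries. -/
def diagRegLoss (d L : ℕ) (η : ℝ) (Wstar : Fin d → ℝ) (v : Fin L → Fin d → ℝ) : ℝ :=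
  (∑ h, (Wstar h - ∏ ℓ, v ℓ h) ^ 2) +
    ∑ h, ((∏ ℓ, ((v ℓ h) ^ 2 + η ^ 2)) - ∏ ℓ, (v ℓ h) ^ 2)

/-- Derivative of the regularized loss in a single coordinate. -/
lemma diagRegLoss_hasDerivAt (d L : ℕ) (η : ℝ) (Wstar : Fin d → ℝ)
    (v : Fin L → Fin d → ℝ) (ℓ : Fin L) (h : Fin d) (x : ℝ) :
    HasDerivAt (fun x => diagRegLoss d L η Wstar
        (Function.update v ℓ (Function.update (v ℓ) h x)))
      (2 * (Wstar h - x * ∏ r ∈ univ.erase ℓ, v r h) * (-(∏ r ∈ univ.erase ℓ, v r h))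
        + (2 * x * ∏ r ∈ univ.erase ℓ, ((v r h) ^ 2 + η ^ 2)
          - 2 * x * (∏ r ∈ univ.erase ℓ, v r h) ^ 2)) x := by
  classical
  set P : ℝ := ∏ r ∈ univ.erase ℓ, v r h with hP
  set Dp : ℝ := ∏ r ∈ univ.erase ℓ, ((v r h) ^ 2 + η ^ 2) with hDp
  set C : ℝ := (∑ h' ∈ univ.erase h, (Wstar h' - ∏ r, v r h') ^ 2)
      + ∑ h' ∈ univ.erase h, ((∏ r, ((v r h') ^ 2 + η ^ 2)) - ∏ r, (v r h') ^ 2) with hC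
  have key : (fun y => diagRegLoss d L η Wstar
      (Function.update v ℓ (Function.update (v ℓ) h y)))
      = fun y => (Wstar h - y * P) ^ 2 + ((y ^ 2 + η ^ 2) * Dp - y ^ 2 * P ^ 2) + C := by
    funext y
    have hv1 : ∀ r, Function.update v ℓ (Function.update (v ℓ) h y) r h
        = Function.update (fun r => v r h) ℓ y r := by
      intro r
      rcases eq_or_ne r ℓ with rfl | hr
      · simp
      · simp [Function.update_of_ne hr]
    have hv2 : ∀ r (h' : Fin d), h' ≠ h →
        Function.update v ℓ (Function.update (v ℓ) h y) r h' = v r h' := by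
      intro r h' hne
      rcases eq_or_ne r ℓ with rfl | hr
      · simp [Function.update_of_ne hne]
      · simp [Function.update_of_ne hr]
    have hprod : (∏ r, Function.update v ℓ (Function.update (v ℓ) h y) r h) = y * P := by
      rw [Finset.prod_congr rfl (fun r _ => hv1 r),
        Finset.prod_update_of_mem (Finset.mem_univ ℓ), Finset.sdiff_singleton_eq_erase]
    have hprodp : (∏ r, ((Function.update v ℓ (Function.update (v ℓ) h y) r h) ^ 2 + η ^ 2))
        = (y ^ 2 + η ^ 2) * Dp := by
      have hrw : ∀ r, (Function.update v ℓ (Function.update (v ℓ) h y) r h) ^ 2 + η ^ 2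
          = Function.update (fun r => (v r h) ^ 2 + η ^ 2) ℓ (y ^ 2 + η ^ 2) r := by
        intro r
        rcases eq_or_ne r ℓ with rfl | hr
        · simp
        · simp [Function.update_of_ne hr]
      rw [Finset.prod_congr rfl (fun r _ => hrw r),
        Finset.prod_update_of_mem (Finset.mem_univ ℓ), Finset.sdiff_singleton_eq_erase]
    have hprodsq : (∏ r, (Function.update v ℓ (Function.update (v ℓ) h y) r h) ^ 2)
        = y ^ 2 * P ^ 2 := by
      rw [Finset.prod_pow, hprod]; ring
    have hrest1 : (∑ h' ∈ univ.erase h,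
          (Wstar h' - ∏ r, Function.update v ℓ (Function.update (v ℓ) h y) r h') ^ 2)
        = ∑ h' ∈ univ.erase h, (Wstar h' - ∏ r, v r h') ^ 2 :=
      Finset.sum_congr rfl fun h' hh' => by
        rw [Finset.prod_congr rfl fun r _ => hv2 r h' (Finset.ne_of_mem_erase hh')]
    have hrest2 : (∑ h' ∈ univ.erase h,
          ((∏ r, ((Function.update v ℓ (Function.update (v ℓ) h y) r h') ^ 2 + η ^ 2))
            - ∏ r, (Function.update v ℓ (Function.update (v ℓ) h y) r h') ^ 2))
        = ∑ h' ∈ univ.erase h, ((∏ r, ((v r h') ^ 2 + η ^ 2)) - ∏ r, (v r h') ^ 2) :=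
      Finset.sum_congr rfl fun h' hh' => by
        have hne := Finset.ne_of_mem_erase hh'
        congr 1
        · exact Finset.prod_congr rfl fun r _ => by rw [hv2 r h' hne]
        · exact Finset.prod_congr rfl fun r _ => by rw [hv2 r h' hne]
    unfold diagRegLoss
    rw [← Finset.add_sum_erase _ _ (Finset.mem_univ h),
      ← Finset.add_sum_erase _ _ (Finset.mem_univ h), hprod, hprodp, hprodsq,
      hrest1, hrest2, hC]
    ring
  have d1 : HasDerivAt (fun y : ℝ => Wstar h - y * P) (-P) x := by
    simpa using ((hasDerivAt_id x).mul_const P).const_sub (Wstar h)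
  have d2 := d1.fun_pow 2
  have d3 : HasDerivAt (fun y : ℝ => y ^ 2 + η ^ 2) (2 * x) x := by
    simpa using (hasDerivAt_pow 2 x).add_const (η ^ 2)
  have d4 : HasDerivAt (fun y : ℝ => y ^ 2) (2 * x) x := by
    simpa using hasDerivAt_pow 2 x
  have dfull := (d2.add ((d3.mul_const Dp).sub (d4.mul_const (P ^ 2)))).add_const C
  rw [key]
  refine dfull.congr_deriv ?_
  norm_num

/-- Along the gradient flow of the regularized loss, the balancing gap between
consecutive layers decays exponentially:
`‖W_ℓ²(t) − W_{ℓ+1}²(t)‖ ≤ exp(−4η^{2L−2} t) ‖W_ℓ²(0) − W_{ℓ+1}²(0)‖` (Frobenius norm). -/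
theorem balancing_exponential_decay_regularized_flow
    (d L : ℕ) (hd : 1 ≤ d) (hL : 2 ≤ L) (η : ℝ) (hη : 0 < η)
    (Wstar : Fin d → ℝ) (w : ℝ → Fin L → Fin d → ℝ)
    (hflow : ∀ t (ℓ : Fin L) (h : Fin d),
      HasDerivAt (fun s => w s ℓ h)
        (-(deriv (fun x => diagRegLoss d L η Wstar
            (Function.update (w t) ℓ (Function.update (w t ℓ) h x))) (w t ℓ h))) t)
    (ℓ ℓ' : Fin L) (hsucc : (ℓ' : ℕ) = (ℓ : ℕ) + 1) :
    ∀ t : ℝ, 0 ≤ t →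
      Real.sqrt (∑ h, ((w t ℓ h) ^ 2 - (w t ℓ' h) ^ 2) ^ 2)
        ≤ Real.exp (-(4 * η ^ (2 * L - 2)) * t) *
            Real.sqrt (∑ h, ((w 0 ℓ h) ^ 2 - (w 0 ℓ' h) ^ 2) ^ 2) := by
  classical
  intro t ht
  set K : ℝ := 4 * η ^ (2 * L - 2) with hKdef
  have hℓne : ℓ' ≠ ℓ := by
    intro hle
    rw [hle] at hsucc
    omega
  have hℓmem : ℓ' ∈ univ.erase ℓ := Finset.mem_erase.2 ⟨hℓne, Finset.mem_univ _⟩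
  have hℓmem' : ℓ ∈ univ.erase ℓ' := Finset.mem_erase.2 ⟨hℓne.symm, Finset.mem_univ _⟩
  -- the derivative of the balancing gap
  have hg : ∀ (h : Fin d) (s : ℝ),
      HasDerivAt (fun τ => (w τ ℓ h) ^ 2 - (w τ ℓ' h) ^ 2)
        (-(4 * η ^ 2 * ∏ r ∈ (univ.erase ℓ).erase ℓ', ((w s r h) ^ 2 + η ^ 2))
          * ((w s ℓ h) ^ 2 - (w s ℓ' h) ^ 2)) s := by
    intro h s
    have hd1 := hflow s ℓ h
    have hd2 := hflow s ℓ' h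
    rw [(diagRegLoss_hasDerivAt d L η Wstar (w s) ℓ h (w s ℓ h)).deriv] at hd1
    rw [(diagRegLoss_hasDerivAt d L η Wstar (w s) ℓ' h (w s ℓ' h)).deriv] at hd2
    have hmain := (hd1.fun_pow 2).sub (hd2.pow 2)
    set a : ℝ := w s ℓ h
    set b : ℝ := w s ℓ' h
    set Q : ℝ := ∏ r ∈ (univ.erase ℓ).erase ℓ', ((w s r h) ^ 2 + η ^ 2) with hQdef
    have hab : a * (∏ r ∈ univ.erase ℓ, w s r h)
        = b * (∏ r ∈ univ.erase ℓ', w s r h) := by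
      rw [Finset.mul_prod_erase univ (fun r => w s r h) (Finset.mem_univ ℓ),
        Finset.mul_prod_erase univ (fun r => w s r h) (Finset.mem_univ ℓ')]
    have hDl : (∏ r ∈ univ.erase ℓ, ((w s r h) ^ 2 + η ^ 2)) = (b ^ 2 + η ^ 2) * Q := by
      rw [hQdef, Finset.mul_prod_erase _ (fun r => (w s r h) ^ 2 + η ^ 2) hℓmem]
    have hDl' : (∏ r ∈ univ.erase ℓ', ((w s r h) ^ 2 + η ^ 2)) = (a ^ 2 + η ^ 2) * Q := by
      rw [hQdef, Finset.erase_right_comm,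
        Finset.mul_prod_erase _ (fun r => (w s r h) ^ 2 + η ^ 2) hℓmem']
    rw [hDl, hDl'] at hmain
    refine hmain.congr_deriv ?_
    push_cast
    norm_num only [pow_one]
    linear_combination (4 * Wstar h) * hab
  -- lower bound on the decay rate
  have hQK : ∀ (h : Fin d) (s : ℝ),
      K ≤ 4 * η ^ 2 * ∏ r ∈ (univ.erase ℓ).erase ℓ', ((w s r h) ^ 2 + η ^ 2) := by
    intro h s
    have hcard : ((univ.erase ℓ).erase ℓ').card = L - 2 := by
      rw [Finset.card_erase_of_mem hℓmem, Finset.card_erase_of_mem (Finset.mem_univ ℓ),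
        Finset.card_univ, Fintype.card_fin]
      omega
    have hprodge : (η ^ 2) ^ (L - 2)
        ≤ ∏ r ∈ (univ.erase ℓ).erase ℓ', ((w s r h) ^ 2 + η ^ 2) := by
      calc (η ^ 2) ^ (L - 2) = ∏ _r ∈ (univ.erase ℓ).erase ℓ', η ^ 2 := by
            rw [Finset.prod_const, hcard]
        _ ≤ _ := Finset.prod_le_prod (fun i _ => by positivity)
            (fun i _ => by nlinarith [sq_nonneg (w s i h)])
    have hexp : η ^ (2 * L - 2) = η ^ 2 * (η ^ 2) ^ (L - 2) := by
      rw [← pow_mul, ← pow_add]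
      congr 1
      omega
    rw [hKdef, hexp]
    have h2 : (0:ℝ) < η ^ 2 := by positivity
    nlinarith [hprodge, h2]
  -- per-coordinate exponential decay
  have key : ∀ h : Fin d, ((w t ℓ h) ^ 2 - (w t ℓ' h) ^ 2) ^ 2
      ≤ Real.exp (-(2 * K) * t) * ((w 0 ℓ h) ^ 2 - (w 0 ℓ' h) ^ 2) ^ 2 := by
    intro h
    set g : ℝ → ℝ := fun τ => (w τ ℓ h) ^ 2 - (w τ ℓ' h) ^ 2 with hgdef
    set u : ℝ → ℝ := fun τ => Real.exp (2 * K * τ) * (g τ) ^ 2 with hudef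
    have hu : ∀ s : ℝ, HasDerivAt u
        (Real.exp (2 * K * s) * (2 * K) * (g s) ^ 2
          + Real.exp (2 * K * s) *
            (2 * g s *
              (-(4 * η ^ 2 * ∏ r ∈ (univ.erase ℓ).erase ℓ', ((w s r h) ^ 2 + η ^ 2))
                * g s))) s := by
      intro s
      have he : HasDerivAt (fun τ => Real.exp (2 * K * τ)) (Real.exp (2 * K * s) * (2 * K)) s := by
        simpa [Function.comp_def] using (Real.hasDerivAt_exp (2 * K * s)).comp s
          ((hasDerivAt_id s).const_mul (2 * K))
      have hgsq := (hg h s).fun_pow 2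
      have := he.mul hgsq
      refine this.congr_deriv ?_
      simp only [hgdef]
      norm_num
    have hanti : Antitone u := by
      apply antitone_of_deriv_nonpos
      · exact fun s => (hu s).differentiableAt
      · intro s
        rw [(hu s).deriv]
        have hc := hQK h s
        have hexp0 : (0:ℝ) < Real.exp (2 * K * s) := Real.exp_pos _
        have hgs : (0:ℝ) ≤ (g s) ^ 2 := sq_nonneg _
        nlinarith [hexp0, hgs, hc, mul_nonneg hgs (sub_nonneg.2 hc)]
    have hle : u t ≤ u 0 := hanti ht
    have hu0 : u 0 = (g 0) ^ 2 := by simp [hudef]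
    have hexpt : (0:ℝ) < Real.exp (2 * K * t) := Real.exp_pos _
    have : Real.exp (2 * K * t) * (g t) ^ 2 ≤ (g 0) ^ 2 := by
      rw [← hu0]; exact hle
    calc (g t) ^ 2 = Real.exp (-(2 * K) * t) * (Real.exp (2 * K * t) * (g t) ^ 2) := by
          rw [← mul_assoc, ← Real.exp_add]
          ring_nf
          simp
      _ ≤ Real.exp (-(2 * K) * t) * (g 0) ^ 2 :=
          mul_le_mul_of_nonneg_left this (Real.exp_nonneg _)
  -- sum and take square roots
  have hsum : (∑ h, ((w t ℓ h) ^ 2 - (w t ℓ' h) ^ 2) ^ 2)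
      ≤ Real.exp (-(2 * K) * t) * ∑ h, ((w 0 ℓ h) ^ 2 - (w 0 ℓ' h) ^ 2) ^ 2 := by
    rw [Finset.mul_sum]
    exact Finset.sum_le_sum fun h _ => key h
  have hsqrt := Real.sqrt_le_sqrt hsum
  refine hsqrt.trans (le_of_eq ?_)
  rw [Real.sqrt_mul (Real.exp_nonneg _)]
  congr 1
  have : Real.exp (-(2 * K) * t) = (Real.exp (-K * t)) ^ 2 := by
    rw [sq, ← Real.exp_add]
    ring_nf
  rw [this, Real.sqrt_sq (Real.exp_nonneg _)]
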